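/- Let A be an n×n ASM and P an n×n permutation matrix such that z_nᵀA = z_nᵀP, where z_n = (n, n−1, …, 1). Then A = P. In particular, if the weighted vertical projection z_nᵀA of an ASM A is a permutation of (1, 2, …, n), then A is a permutation matrix. -/

import Mathlib

open Finset

/-- A line (vector) of integers is "alternating" in the ASM sense:
all prefix sums are 0 or 1, and the total sum is 1. This is equivalent to the
nonzero entries being ±1, alternating in sign, beginning and ending with +1. -/
def AltLine {n : ℕ} (v : Fin n → ℤ) : Prop :=
  (∀ t : Fin n, (∑ s ∈ Finset.univ.filter (fun s => s ≤ t), v s) = 0 ∨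
      (∑ s ∈ Finset.univ.filter (fun s => s ≤ t), v s) = 1) ∧
  (∑ s, v s) = 1

/-- Alternating sign matrix. -/
def IsAsm {n : ℕ} (A : Matrix (Fin n) (Fin n) ℤ) : Prop :=
  (∀ i, AltLine (fun j => A i j)) ∧ (∀ j, AltLine (fun i => A i j))

/-- Alternating sign hypermatrix: every line in each of the three directions alternates. -/
def IsAshm {n : ℕ} (A : Fin n → Fin n → Fin n → ℤ) : Prop :=
  (∀ j k, AltLine (fun i => A i j k)) ∧
  (∀ i k, AltLine (fun j => A i j k)) ∧
  (∀ i j, AltLine (fun k => A i j k))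

/-- The ASHM-Latin square `L(A) = 1·A₁ + 2·A₂ + ⋯ + n·Aₙ` (planes indexed from 1). -/
def Lmat {n : ℕ} (A : Fin n → Fin n → Fin n → ℤ) (i j : Fin n) : ℤ :=
  ∑ k : Fin n, ((k.1 : ℤ) + 1) * A i j k

/-- partial column sums -/
def Spart {n : ℕ} (A : Matrix (Fin n) (Fin n) ℤ) (t j : Fin n) : ℤ :=
  ∑ i ∈ Finset.univ.filter (fun i => i ≤ t), A i j

lemma Spart01 {n : ℕ} (A : Matrix (Fin n) (Fin n) ℤ) (hA : IsAsm A) (t j : Fin n) :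
    Spart A t j = 0 ∨ Spart A t j = 1 := (hA.2 j).1 t

lemma level_sum {n : ℕ} (A : Matrix (Fin n) (Fin n) ℤ) (hA : IsAsm A) (t : Fin n) :
    ∑ j, Spart A t j = (t.1 : ℤ) + 1 := by
  unfold Spart
  rw [Finset.sum_comm]
  have : ∀ i ∈ Finset.univ.filter (fun i => i ≤ t), ∑ j, A i j = 1 := fun i _ => (hA.1 i).2
  rw [Finset.sum_congr rfl this, Finset.sum_const, nsmul_eq_mul, mul_one]
  have : Finset.univ.filter (fun i => i ≤ t) = Iic t := by ext x; simp
  rw [this, Fin.card_Iic]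
  push_cast; ring

lemma abel_sum {n : ℕ} (A : Matrix (Fin n) (Fin n) ℤ) (j : Fin n) :
    ∑ t, Spart A t j = ∑ i, ((n - i.1 : ℕ) : ℤ) * A i j := by
  unfold Spart
  have h1 : ∀ t : Fin n, (∑ i ∈ Finset.univ.filter (fun i => i ≤ t), A i j)
      = ∑ i, if i ≤ t then A i j else 0 := fun t => by rw [Finset.sum_filter]
  rw [Finset.sum_congr rfl (fun t _ => h1 t), Finset.sum_comm]
  refine Finset.sum_congr rfl (fun i _ => ?_)
  have : (∑ t : Fin n, if i ≤ t then A i j else 0)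
      = ∑ t ∈ Finset.univ.filter (fun t => i ≤ t), A i j := (Finset.sum_filter _ _).symm
  rw [this, Finset.sum_const]
  have : Finset.univ.filter (fun t => i ≤ t) = Ici i := by ext x; simp
  rw [this, Fin.card_Ici, nsmul_eq_mul]

/-- the key rigidity lemma: weighted column sums determine A among ASMs. -/
lemma asm_perm_key {n : ℕ} (A : Matrix (Fin n) (Fin n) ℤ) (hA : IsAsm A)
    (σ : Equiv.Perm (Fin n))
    (h : ∀ j : Fin n, (∑ i : Fin n, ((n - i.1 : ℕ) : ℤ) * A i j)
          = ∑ i : Fin n, ((n - i.1 : ℕ) : ℤ) * (if σ i = j then (1 : ℤ) else 0)) :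
    ∀ i j : Fin n, A i j = if σ i = j then (1 : ℤ) else 0 := by
  -- a j = position of the 1 in column j of the permutation matrix
  set a : Fin n → ℕ := fun j => ((σ.symm j : Fin n) : ℕ) with ha
  -- total column weighted sum of A equals n - a j
  have hcol : ∀ j, ∑ t, Spart A t j = ((n - a j : ℕ) : ℤ) := by
    intro j
    rw [abel_sum, h j]
    have : ∀ i : Fin n, ((n - i.1 : ℕ) : ℤ) * (if σ i = j then (1 : ℤ) else 0)
        = if i = σ.symm j then ((n - i.1 : ℕ) : ℤ) else 0 := by
      intro i
      by_cases hi : σ i = j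
      · have : i = σ.symm j := by rw [← hi, Equiv.symm_apply_apply]
        simp [hi, this]
      · have : i ≠ σ.symm j := fun hh => hi (by rw [hh, Equiv.apply_symm_apply])
        simp [hi, this]
    rw [Finset.sum_congr rfl (fun i _ => this i), Finset.sum_ite_eq' _ (σ.symm j)]
    simp [ha]
  -- key: partial sums agree with those of the permutation matrix
  have key : ∀ t j : Fin n, Spart A t j = if a j ≤ t.1 then 1 else 0 := by
    suffices key' : ∀ m : ℕ, ∀ t : Fin n, n - t.1 ≤ m →
        ∀ j, Spart A t j = if a j ≤ t.1 then 1 else 0 by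
      exact fun t j => key' n t (Nat.sub_le _ _) j
    intro m
    induction m with
    | zero =>
        intro t ht
        exact absurd ht (by have := t.2; omega)
    | succ m ih =>
      intro t ht
      -- induction hypothesis for all larger t'
      have IH : ∀ t' : Fin n, t.1 < t'.1 → ∀ j, Spart A t' j = if a j ≤ t'.1 then 1 else 0 := by
        intro t' ht' j
        exact ih t' (by omega) j
      -- split the column sum
      have hsplit : ∀ j, ∑ t' ∈ Finset.univ.filter (fun t' => t' ≤ t), Spart A t' j
          + ∑ t' ∈ Finset.univ.filter (fun t' => t < t'), Spart A t' j
          = ((n - a j : ℕ) : ℤ) := by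
        intro j
        rw [← hcol j]
        rw [← Finset.sum_filter_add_sum_filter_not Finset.univ (fun t' => t' ≤ t) (Spart A · j)]
        congr 1
        apply Finset.sum_congr _ (fun _ _ => rfl)
        ext x; simp [not_le]
      -- value of the upper part
      have hupper : ∀ j, ∑ t' ∈ Finset.univ.filter (fun t' => t < t'), Spart A t' j
          = ((Finset.univ.filter (fun t' : Fin n => t < t' ∧ a j ≤ t'.1)).card : ℤ) := by
        intro j
        rw [Finset.sum_congr rfl (fun t' ht' => IH t' (by simpa using ht') j)]
        rw [Finset.sum_ite, Finset.sum_const, Finset.sum_const, Finset.filter_filter]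
        simp only [nsmul_eq_mul, mul_one, mul_zero, add_zero]
      -- zero case
      have hzero : ∀ j, t.1 < a j → Spart A t j = 0 := by
        intro j haj
        have hcard : (Finset.univ.filter (fun t' : Fin n => t < t' ∧ a j ≤ t'.1)).card
            = n - a j := by
          have : Finset.univ.filter (fun t' : Fin n => t < t' ∧ a j ≤ t'.1)
              = Ici (σ.symm j) := by
            ext x
            have hh : a j = ((σ.symm j : Fin n) : ℕ) := rfl
            simp only [mem_filter, mem_univ, true_and, mem_Ici, Fin.lt_def, Fin.le_def]
            omega
          rw [this, Fin.card_Ici]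
        have hlow : ∑ t' ∈ Finset.univ.filter (fun t' => t' ≤ t), Spart A t' j = 0 := by
          have := hsplit j
          rw [hupper j, hcard] at this
          linarith
        have hnonneg : ∀ t' ∈ Finset.univ.filter (fun t' => t' ≤ t), 0 ≤ Spart A t' j := by
          intro t' _
          rcases Spart01 A hA t' j with h0 | h1 <;> omega
        have := (Finset.sum_eq_zero_iff_of_nonneg hnonneg).mp hlow t (by simp)
        exact this
      intro j
      by_cases haj : a j ≤ t.1
      · -- need Spart A t j = 1; use level sum
        simp only [haj, if_true]
        set B := Finset.univ.filter (fun j' : Fin n => a j' ≤ t.1) with hB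
        have hBcard : B.card = t.1 + 1 := by
          have himg : B = Finset.map σ.toEmbedding
              (Finset.univ.filter (fun i : Fin n => i.1 ≤ t.1)) := by
            ext x
            simp only [hB, mem_filter, mem_univ, true_and, Finset.mem_map,
              Equiv.coe_toEmbedding]
            constructor
            · intro hx
              exact ⟨σ.symm x, hx, Equiv.apply_symm_apply _ _⟩
            · rintro ⟨i, hi, rfl⟩
              have hsi : σ.symm (σ i) = i := Equiv.symm_apply_apply _ _
              show ((σ.symm (σ i) : Fin n) : ℕ) ≤ t.1
              rw [hsi]; exact hi
          rw [himg, Finset.card_map]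
          have : Finset.univ.filter (fun i : Fin n => i.1 ≤ t.1) = Iic t := by
            ext x; simp only [mem_filter, mem_univ, true_and, mem_Iic, Fin.le_def]
          rw [this, Fin.card_Iic]
        have hlevel := level_sum A hA t
        have hout : ∀ j' ∈ Finset.univ \ B, Spart A t j' = 0 := by
          intro j' hj'
          simp only [hB, Finset.mem_sdiff, mem_filter, mem_univ, true_and, not_le] at hj'
          exact hzero j' hj'
        have hsum : ∑ j' ∈ B, Spart A t j' = (t.1 : ℤ) + 1 := by
          have : ∑ j', Spart A t j' = ∑ j' ∈ B, Spart A t j' := by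
            rw [← Finset.sum_sdiff (Finset.subset_univ B)]
            rw [Finset.sum_eq_zero hout, zero_add]
          rw [← this, hlevel]
        -- each term ≤ 1 and there are t+1 of them, so each = 1
        have hle : ∀ j' ∈ B, Spart A t j' ≤ 1 := by
          intro j' _
          rcases Spart01 A hA t j' with h0 | h1 <;> omega
        have : ∀ j' ∈ B, Spart A t j' = 1 := by
          intro j' hj'
          by_contra hne
          have hlt : Spart A t j' < 1 := lt_of_le_of_ne (hle j' hj') hne
          have : ∑ j'' ∈ B, Spart A t j'' < ∑ j'' ∈ B, (1 : ℤ) := by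
            apply Finset.sum_lt_sum hle ⟨j', hj', hlt⟩
          rw [hsum, Finset.sum_const, nsmul_eq_mul, mul_one, hBcard] at this
          push_cast at this
          omega
        exact this j (Finset.mem_filter.mpr ⟨Finset.mem_univ _, haj⟩)
      · simp only [haj, if_false]
        exact hzero j (by omega)
  -- recover A from partial sums
  intro i j
  have hsplit : Spart A i j = A i j + ∑ i' ∈ Finset.univ.filter (fun i' => i' < i), A i' j := by
    unfold Spart
    have : Finset.univ.filter (fun i' => i' ≤ i)
        = insert i (Finset.univ.filter (fun i' => i' < i)) := by
      ext x
      simp only [mem_filter, mem_univ, true_and, Finset.mem_insert, Fin.le_def,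
        Fin.lt_def, Fin.ext_iff]
      omega
    rw [this, Finset.sum_insert (by simp)]
  have hT : ∑ i' ∈ Finset.univ.filter (fun i' => i' < i), A i' j
      = if a j < i.1 then 1 else 0 := by
    rcases Nat.eq_zero_or_pos i.1 with h0 | hpos
    · have : Finset.univ.filter (fun i' : Fin n => i' < i) = ∅ := by
        apply Finset.filter_eq_empty_iff.mpr
        intro x _
        simp only [Fin.lt_def, h0]
        omega
      rw [this, Finset.sum_empty]
      rw [h0]
      simp
    · set t : Fin n := ⟨i.1 - 1, by omega⟩ with htd
      have : Finset.univ.filter (fun i' : Fin n => i' < i)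
          = Finset.univ.filter (fun i' : Fin n => i' ≤ t) := by
        ext x
        simp only [mem_filter, mem_univ, true_and, Fin.lt_def, Fin.le_def, htd]
        omega
      rw [this]
      have := key t j
      unfold Spart at this
      rw [this]
      simp only [htd]
      by_cases h : a j < i.1
      · rw [if_pos (by omega), if_pos h]
      · rw [if_neg (by omega), if_neg h]
  have hkey := key i j
  rw [hsplit, hT] at hkey
  have hval : a j = ((σ.symm j : Fin n) : ℕ) := rfl
  by_cases hc : σ i = j
  · rw [if_pos hc]
    have hai : a j = i.1 := by
      rw [hval, ← hc, Equiv.symm_apply_apply]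
    split_ifs at hkey <;> omega
  · rw [if_neg hc]
    have hai : a j ≠ i.1 := by
      intro hh
      apply hc
      have hsi : σ.symm j = i := Fin.ext (by rw [← hval]; exact hh)
      rw [← hsi, Equiv.apply_symm_apply]
    split_ifs at hkey <;> omega

theorem stmt10 {n : ℕ} (A : Matrix (Fin n) (Fin n) ℤ) (hA : IsAsm A) :
    (∀ σ : Equiv.Perm (Fin n),
      (∀ j : Fin n,
          (∑ i : Fin n, ((n - i.1 : ℕ) : ℤ) * A i j)
            = ∑ i : Fin n, ((n - i.1 : ℕ) : ℤ) * (if σ i = j then (1 : ℤ) else 0)) →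
      ∀ i j : Fin n, A i j = if σ i = j then (1 : ℤ) else 0) ∧
    ((∃ τ : Equiv.Perm (Fin n), ∀ j : Fin n,
          (∑ i : Fin n, ((n - i.1 : ℕ) : ℤ) * A i j) = ((τ j).1 : ℤ) + 1) →
      ∃ σ : Equiv.Perm (Fin n), ∀ i j : Fin n,
        A i j = if σ i = j then (1 : ℤ) else 0) := by
  constructor
  · exact asm_perm_key A hA
  · rintro ⟨τ, hτ⟩
    set σ : Equiv.Perm (Fin n) := (τ.trans (Fin.revPerm)).symm with hσ
    refine ⟨σ, asm_perm_key A hA σ ?_⟩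
    intro j
    rw [hτ j]
    have hval : ∀ i : Fin n, ((n - i.1 : ℕ) : ℤ) * (if σ i = j then (1 : ℤ) else 0)
        = if i = σ.symm j then ((n - i.1 : ℕ) : ℤ) else 0 := by
      intro i
      by_cases hi : σ i = j
      · have : i = σ.symm j := by rw [← hi, Equiv.symm_apply_apply]
        simp [hi, this]
      · have : i ≠ σ.symm j := fun hh => hi (by rw [hh, Equiv.apply_symm_apply])
        simp [hi, this]
    rw [Finset.sum_congr rfl (fun i _ => hval i), Finset.sum_ite_eq' _ (σ.symm j)]
    simp only [mem_univ, if_true]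
    have : σ.symm j = Fin.rev (τ j) := by simp [hσ]
    rw [this]
    have h2 : (τ j).1 < n := (τ j).2
    rw [Fin.val_rev]
    omega
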